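/- For the binary symmetric channel with crossover probability δ ∈ (0, 1/2), the Kullback–Leibler contraction coefficient equals (1 − 2δ)²; that is, for all probability distributions P, Q on {0,1} with 0 < D(P‖Q) < ∞ one has D(K∘P ‖ K∘Q) ≤ (1 − 2δ)² · D(P‖Q), and the supremum of D(K∘P ‖ K∘Q)/D(P‖Q) over all such pairs (P, Q) equals (1 − 2δ)². -/

import Mathlib

/-- Kullback–Leibler divergence between two distributions on a finite alphabet. -/
noncomputable def klDiv {X : Type*} [Fintype X] (P Q : X → ℝ) : ℝ :=
  ∑ x, P x * Real.log (P x / Q x)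

/-- `P` is a probability distribution on the finite alphabet `X`. -/
def IsProbDist {X : Type*} [Fintype X] (P : X → ℝ) : Prop :=
  (∀ x, 0 ≤ P x) ∧ ∑ x, P x = 1

/-- Pushforward `K ∘ P` of a distribution `P` through a channel `K`. -/
noncomputable def pushforward {X Y : Type*} [Fintype X] (K : X → Y → ℝ) (P : X → ℝ) :
    Y → ℝ := fun y => ∑ x, P x * K x y

/-- The Kullback–Leibler contraction coefficient of a channel `K`: the supremum of
`D(K∘P‖K∘Q)/D(P‖Q)` over pairs of distributions with `0 < D(P‖Q) < ∞` (finiteness of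
`D(P‖Q)` on a finite alphabet is equivalent to absolute continuity `P ≪ Q`). -/
noncomputable def etaKL {X Y : Type*} [Fintype X] [Fintype Y] (K : X → Y → ℝ) : ℝ :=
  sSup {r : ℝ | ∃ P Q : X → ℝ, IsProbDist P ∧ IsProbDist Q ∧
    (∀ x, Q x = 0 → P x = 0) ∧ 0 < klDiv P Q ∧
    r = klDiv (pushforward K P) (pushforward K Q) / klDiv P Q}

/-- The binary symmetric channel with crossover probability `δ`. -/
noncomputable def BSC (δ : ℝ) : Bool → Bool → ℝ := fun x y => if y = x then 1 - δ else δ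


open Real Set


lemma mono_aux {f f' : ℝ → ℝ} {a b : ℝ} (hab : a ≤ b)
    (hc : ContinuousOn f (Icc a b))
    (hd : ∀ x ∈ Ioo a b, HasDerivAt f (f' x) x)
    (h0 : ∀ x ∈ Ioo a b, 0 ≤ f' x) : f a ≤ f b := by
  rcases eq_or_lt_of_le hab with h | h
  · rw [h]
  · have := monotoneOn_of_deriv_nonneg (convex_Icc a b) hc
      (by rw [interior_Icc]; exact fun x hx => (hd x hx).differentiableAt.differentiableWithinAt)
      (by rw [interior_Icc]; intro x hx; rw [(hd x hx).deriv]; exact h0 x hx)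
    exact this (left_mem_Icc.2 hab) (right_mem_Icc.2 hab) hab

lemma anti_aux {f f' : ℝ → ℝ} {a b : ℝ} (hab : a ≤ b)
    (hc : ContinuousOn f (Icc a b))
    (hd : ∀ x ∈ Ioo a b, HasDerivAt f (f' x) x)
    (h0 : ∀ x ∈ Ioo a b, f' x ≤ 0) : f b ≤ f a := by
  rcases eq_or_lt_of_le hab with h | h
  · rw [h]
  · have := antitoneOn_of_deriv_nonpos (convex_Icc a b) hc
      (by rw [interior_Icc]; exact fun x hx => (hd x hx).differentiableAt.differentiableWithinAt)
      (by rw [interior_Icc]; intro x hx; rw [(hd x hx).deriv]; exact h0 x hx)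
    exact this (left_mem_Icc.2 hab) (right_mem_Icc.2 hab) hab

lemma hasDerivAt_log1p {t : ℝ} (h : (1:ℝ) + t ≠ 0) :
    HasDerivAt (fun t => Real.log (1 + t)) (1+t)⁻¹ t := by
  have := (Real.hasDerivAt_log h).comp t ((hasDerivAt_id t).const_add 1)
  simpa [Function.comp_def] using this

lemma hasDerivAt_log1m {t : ℝ} (h : (1:ℝ) - t ≠ 0) :
    HasDerivAt (fun t => Real.log (1 - t)) (-(1-t)⁻¹) t := by
  have := (Real.hasDerivAt_log h).comp t ((hasDerivAt_id t).const_sub 1)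
  simpa [Function.comp_def] using this

lemma contOn_logratio {a b : ℝ} (h1 : ∀ t ∈ Icc a b, (1:ℝ)+t ≠ 0) (h2 : ∀ t ∈ Icc a b, (1:ℝ)-t ≠ 0) :
    ContinuousOn (fun t => Real.log (1+t) - Real.log (1-t)) (Icc a b) := by
  apply ContinuousOn.sub
  · exact Real.continuousOn_log.comp (by fun_prop) (fun t ht => h1 t ht)
  · exact Real.continuousOn_log.comp (by fun_prop) (fun t ht => h2 t ht)

lemma log_ratio_ge {x : ℝ} (h0 : 0 ≤ x) (h1 : x < 1) :
    2*x ≤ Real.log (1+x) - Real.log (1-x) := by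
  have key := mono_aux (f := fun t => Real.log (1+t) - Real.log (1-t) - 2*t)
    (f' := fun t => (1+t)⁻¹ + (1-t)⁻¹ - 2) h0 ?_ ?_ ?_
  · simpa using key
  · apply ContinuousOn.sub
    · apply contOn_logratio
      · intro t ht; nlinarith [ht.1, ht.2]
      · intro t ht; nlinarith [ht.1, ht.2]
    · fun_prop
  · intro t ht
    have e1 : (1:ℝ)+t ≠ 0 := by nlinarith [ht.1, ht.2]
    have e2 : (1:ℝ)-t ≠ 0 := by nlinarith [ht.1, ht.2]
    have := ((hasDerivAt_log1p e1).sub (hasDerivAt_log1m e2)).sub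
      ((hasDerivAt_id t).const_mul 2)
    exact this.congr_deriv (by ring)
  · intro t ht
    have e1 : (0:ℝ) < 1+t := by nlinarith [ht.1, ht.2]
    have e2 : (0:ℝ) < 1-t := by nlinarith [ht.1, ht.2]
    have : (1+t)⁻¹ + (1-t)⁻¹ = 2/((1+t)*(1-t)) := by field_simp; ring
    show 0 ≤ (1+t)⁻¹ + (1-t)⁻¹ - 2
    rw [this, sub_nonneg, le_div_iff₀ (by positivity)]
    nlinarith [sq_nonneg t, ht.1]

lemma log_ratio_le {x : ℝ} (h0 : 0 ≤ x) (h1 : x ≤ 1/2) :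
    Real.log (1+x) - Real.log (1-x) ≤ 2*x + 4*x^3 := by
  have key := mono_aux (f := fun t => 2*t + 4*t^3 - (Real.log (1+t) - Real.log (1-t)))
    (f' := fun t => 2 + 12*t^2 - ((1+t)⁻¹ + (1-t)⁻¹)) h0 ?_ ?_ ?_
  · simpa using key
  · apply ContinuousOn.sub
    · fun_prop
    · apply contOn_logratio
      · intro t ht; nlinarith [ht.1, ht.2]
      · intro t ht; nlinarith [ht.1, ht.2]
  · intro t ht
    have e1 : (1:ℝ)+t ≠ 0 := by nlinarith [ht.1, ht.2]
    have e2 : (1:ℝ)-t ≠ 0 := by nlinarith [ht.1, ht.2]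
    have := (((hasDerivAt_id t).const_mul 2).add (((hasDerivAt_pow 3 t)).const_mul 4)).sub
      ((hasDerivAt_log1p e1).sub (hasDerivAt_log1m e2))
    exact this.congr_deriv (by ring)
  · intro t ht
    have e1 : (0:ℝ) < 1+t := by nlinarith [ht.1, ht.2]
    have e2 : (0:ℝ) < 1-t := by nlinarith [ht.1, ht.2]
    have h' : t ≤ 1/2 := le_of_lt (lt_of_lt_of_le ht.2 h1)
    have : (1+t)⁻¹ + (1-t)⁻¹ = 2/((1+t)*(1-t)) := by field_simp; ring
    show 0 ≤ 2 + 12*t^2 - ((1+t)⁻¹ + (1-t)⁻¹)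
    rw [this, sub_nonneg, div_le_iff₀ (by positivity)]
    have ht2 : t^2 ≤ 1/4 := by nlinarith [ht.1]
    nlinarith [sq_nonneg t, ht2]

noncomputable def Gf (u : ℝ) : ℝ := (1+u)*Real.log (1+u) + (1-u)*Real.log (1-u)

lemma contOn_Gf {a b : ℝ} (h1 : ∀ t ∈ Icc a b, (1:ℝ)+t ≠ 0) (h2 : ∀ t ∈ Icc a b, (1:ℝ)-t ≠ 0) :
    ContinuousOn Gf (Icc a b) := by
  apply ContinuousOn.add
  · exact ContinuousOn.mul (by fun_prop)
      (Real.continuousOn_log.comp (by fun_prop) (fun t ht => h1 t ht))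
  · exact ContinuousOn.mul (by fun_prop)
      (Real.continuousOn_log.comp (by fun_prop) (fun t ht => h2 t ht))

lemma hasDerivAt_Gf {t : ℝ} (h1 : (1:ℝ)+t ≠ 0) (h2 : (1:ℝ)-t ≠ 0) :
    HasDerivAt Gf (Real.log (1+t) - Real.log (1-t)) t := by
  have d1 := (((hasDerivAt_id t).const_add 1).mul (hasDerivAt_log1p h1))
  have d2 := (((hasDerivAt_id t).const_sub 1).mul (hasDerivAt_log1m h2))
  have := d1.add d2
  have e : (1 * Real.log (1 + t) + (1 + t) * (1 + t)⁻¹) +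
      (-1 * Real.log (1 - t) + (1 - t) * -(1 - t)⁻¹) = Real.log (1+t) - Real.log (1-t) := by
    rw [mul_inv_cancel₀ h1]
    have : (1 - t) * -(1 - t)⁻¹ = -1 := by field_simp
    rw [this]; ring
  rw [← e]
  exact this

lemma G_ge {x : ℝ} (h0 : 0 ≤ x) (h1 : x < 1) : x^2 ≤ Gf x := by
  have key := mono_aux (f := fun t => Gf t - t^2)
    (f' := fun t => (Real.log (1+t) - Real.log (1-t)) - 2*t) h0 ?_ ?_ ?_
  · have : Gf 0 = 0 := by simp [Gf]
    simpa [this] using key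
  · apply ContinuousOn.sub
    · apply contOn_Gf
      · intro t ht; nlinarith [ht.1, ht.2]
      · intro t ht; nlinarith [ht.1, ht.2]
    · fun_prop
  · intro t ht
    have e1 : (1:ℝ)+t ≠ 0 := by nlinarith [ht.1, ht.2]
    have e2 : (1:ℝ)-t ≠ 0 := by nlinarith [ht.1, ht.2]
    have := (hasDerivAt_Gf e1 e2).sub (hasDerivAt_pow 2 t)
    exact this.congr_deriv (by ring)
  · intro t ht
    have := log_ratio_ge ht.1.le (lt_trans ht.2 h1)
    simp only [sub_nonneg]
    linarith

lemma G_le {x : ℝ} (h0 : 0 ≤ x) (h1 : x ≤ 1/2) : Gf x ≤ x^2 + x^4 := by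
  have key := mono_aux (f := fun t => t^2 + t^4 - Gf t)
    (f' := fun t => (2*t + 4*t^3) - (Real.log (1+t) - Real.log (1-t))) h0 ?_ ?_ ?_
  · have : Gf 0 = 0 := by simp [Gf]
    simp [this] at key
    linarith
  · apply ContinuousOn.sub
    · fun_prop
    · apply contOn_Gf
      · intro t ht; nlinarith [ht.1, ht.2]
      · intro t ht; nlinarith [ht.1, ht.2]
  · intro t ht
    have e1 : (1:ℝ)+t ≠ 0 := by nlinarith [ht.1, ht.2]
    have e2 : (1:ℝ)-t ≠ 0 := by nlinarith [ht.1, ht.2]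
    have := (((hasDerivAt_pow 2 t).add (hasDerivAt_pow 4 t)).sub (hasDerivAt_Gf e1 e2))
    exact this.congr_deriv (by ring)
  · intro t ht
    have := log_ratio_le ht.1.le (le_trans ht.2.le h1)
    simp only [sub_nonneg]
    linarith


noncomputable def dKL (p q : ℝ) : ℝ :=
  p * (Real.log p - Real.log q) + (1 - p) * (Real.log (1 - p) - Real.log (1 - q))

lemma dKL_self (p : ℝ) : dKL p p = 0 := by simp [dKL]

lemma hasDerivAt_dKL {p q : ℝ} (h0 : q ≠ 0) (h1 : (1:ℝ) - q ≠ 0) :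
    HasDerivAt (fun t => dKL p t) (-(p/q) + (1-p)/(1-q)) q := by
  have d1 : HasDerivAt (fun t : ℝ => p * (Real.log p - Real.log t)) (-(p/q)) q := by
    have := ((Real.hasDerivAt_log h0).const_sub (Real.log p)).const_mul p
    refine this.congr_deriv ?_
    field_simp
  have d2 : HasDerivAt (fun t : ℝ => (1-p) * (Real.log (1-p) - Real.log (1-t)))
      ((1-p)/(1-q)) q := by
    have dl : HasDerivAt (fun t : ℝ => Real.log (1 - t)) (-(1-q)⁻¹) q := by
      have := (Real.hasDerivAt_log h1).comp q ((hasDerivAt_id q).const_sub 1)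
      simpa [Function.comp_def] using this
    have := (dl.const_sub (Real.log (1-p))).const_mul (1-p)
    refine this.congr_deriv ?_
    field_simp
  exact d1.add d2

lemma contOn_dKL {p : ℝ} {S : Set ℝ} (h1 : p = 0 ∨ ∀ t ∈ S, t ≠ 0)
    (h2 : p = 1 ∨ ∀ t ∈ S, (1:ℝ) - t ≠ 0) :
    ContinuousOn (fun t => dKL p t) S := by
  apply ContinuousOn.add
  · rcases h1 with h | h
    · exact (continuousOn_const (c := (0:ℝ))).congr (fun t _ => by simp [h])
    · exact ContinuousOn.mul continuousOn_const
        (ContinuousOn.sub continuousOn_const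
          (Real.continuousOn_log.comp continuousOn_id (fun t ht => h t ht)))
  · rcases h2 with h | h
    · exact (continuousOn_const (c := (0:ℝ))).congr (fun t _ => by simp [h])
    · exact ContinuousOn.mul continuousOn_const
        (ContinuousOn.sub continuousOn_const
          (Real.continuousOn_log.comp (by fun_prop) (fun t ht => h t ht)))

lemma div_form (a b : ℝ) (ha : a ≠ 0) (hb : (1:ℝ) - a ≠ 0) :
    -(b/a) + (1-b)/(1-a) = (a-b)/(a*(1-a)) := by
  field_simp; ring

section Key
variable {δ p q : ℝ}

lemma keyIneq (hδ₀ : 0 < δ) (hδ₁ : δ < 1/2) (hp0 : 0 ≤ p) (hp1 : p ≤ 1)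
    (hq0 : 0 < q) (hq1 : q < 1) :
    dKL (δ + (1-2*δ)*p) (δ + (1-2*δ)*q) ≤ (1-2*δ)^2 * dKL p q := by
  obtain ⟨s, hs⟩ : ∃ s : ℝ, s = 1 - 2*δ := ⟨_, rfl⟩
  rw [← hs]
  have hs0 : 0 < s := by rw [hs]; linarith
  have hs1 : s < 1 := by rw [hs]; linarith
  have hsp0 : 0 ≤ s*p := mul_nonneg hs0.le hp0
  have hsp1 : s*p ≤ s := by nlinarith
  set g : ℝ → ℝ := fun t => s^2 * dKL p t - dKL (δ + s*p) (δ + s*t) with hg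
  -- g p = 0
  have hgp : g p = 0 := by simp [hg, dKL_self]
  -- derivative of g
  have hder : ∀ t, 0 < t → t < 1 →
      HasDerivAt g (s^2*((t-p)/(t*(1-t))) - s^2*((t-p)/((δ+s*t)*(1-(δ+s*t))))) t := by
    intro t ht0 ht1
    have ht0' : t ≠ 0 := ne_of_gt ht0
    have ht1' : (1:ℝ) - t ≠ 0 := by linarith
    have htt0 : (0:ℝ) < δ + s*t := by positivity
    have htt1 : δ + s*t < 1 := by nlinarith
    have d1 := (hasDerivAt_dKL (p := p) ht0' ht1').const_mul (s^2)
    have haff : HasDerivAt (fun t : ℝ => δ + s*t) s t := by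
      simpa using ((hasDerivAt_id t).const_mul s).const_add δ
    have d2 := (hasDerivAt_dKL (p := δ + s*p) (ne_of_gt htt0) (by linarith)).comp t haff
    have := d1.sub d2
    refine this.congr_deriv ?_
    rw [div_form t p ht0' ht1', div_form (δ+s*t) (δ+s*p) (ne_of_gt htt0) (by linarith)]
    have e3 : δ + s*t - (δ + s*p) = s*(t-p) := by ring
    rw [e3]
    ring
  -- variance comparison
  have hvar : ∀ t : ℝ, t*(1-t) ≤ (δ+s*t)*(1-(δ+s*t)) := by
    intro t
    have key : (δ+s*t)*(1-(δ+s*t)) - t*(1-t) = δ*(1-δ)*(1-2*t)^2 := by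
      rw [hs]; ring
    nlinarith [mul_nonneg (mul_nonneg hδ₀.le (by linarith : (0:ℝ) ≤ 1-δ)) (sq_nonneg (1-2*t))]
  have main : 0 ≤ g q := by
    rcases le_or_gt p q with hpq | hpq
    · -- increasing on [p,q]
      have := mono_aux (f := g)
        (f' := fun t => s^2*((t-p)/(t*(1-t))) - s^2*((t-p)/((δ+s*t)*(1-(δ+s*t))))) hpq ?_ ?_ ?_
      · rw [hgp] at this; exact this
      · apply ContinuousOn.sub
        · apply ContinuousOn.mul continuousOn_const
          apply contOn_dKL
          · rcases eq_or_lt_of_le hp0 with h | h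
            · exact Or.inl h.symm
            · exact Or.inr (fun t ht => ne_of_gt (lt_of_lt_of_le h ht.1))
          · exact Or.inr (fun t ht => by have := ht.2; intro hc; nlinarith)
        · have hcont : ContinuousOn (fun u => dKL (δ + s*p) u) (Icc (δ+s*p) (δ+s*q)) := by
            apply contOn_dKL
            · exact Or.inr (fun u hu => by have := hu.1; intro hc; nlinarith)
            · exact Or.inr (fun u hu => by
                have h2 := hu.2
                have : s*q ≤ s := by nlinarith
                intro hc; nlinarith)
          apply hcont.comp (by fun_prop)
          intro t ht
          have h1 := mul_le_mul_of_nonneg_left ht.1 hs0.le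
          have h2 := mul_le_mul_of_nonneg_left ht.2 hs0.le
          exact Set.mem_Icc.mpr ⟨by dsimp only; linarith, by dsimp only; linarith⟩
      · intro t ht
        exact hder t (lt_of_le_of_lt hp0 ht.1) (lt_trans ht.2 hq1)
      · intro t ht
        have ht0 : 0 < t := lt_of_le_of_lt hp0 ht.1
        have ht1 : t < 1 := lt_trans ht.2 hq1
        have htp : 0 ≤ t - p := by linarith [ht.1]
        have hX : 0 < t*(1-t) := mul_pos ht0 (by linarith)
        have hd := div_le_div_of_nonneg_left htp hX (hvar t)
        nlinarith [mul_le_mul_of_nonneg_left hd (sq_nonneg s)]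
    · -- decreasing on [q,p]
      have := anti_aux (f := g)
        (f' := fun t => s^2*((t-p)/(t*(1-t))) - s^2*((t-p)/((δ+s*t)*(1-(δ+s*t))))) hpq.le ?_ ?_ ?_
      · rw [hgp] at this; exact this
      · apply ContinuousOn.sub
        · apply ContinuousOn.mul continuousOn_const
          apply contOn_dKL
          · exact Or.inr (fun t ht => ne_of_gt (lt_of_lt_of_le hq0 ht.1))
          · rcases eq_or_lt_of_le hp1 with h | h
            · exact Or.inl h
            · exact Or.inr (fun t ht => by have := ht.2; intro hc; nlinarith)
        · have hcont : ContinuousOn (fun u => dKL (δ + s*p) u) (Icc (δ+s*q) (δ+s*p)) := by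
            apply contOn_dKL
            · exact Or.inr (fun u hu => by
                have h1 := hu.1
                have : 0 ≤ s*q := mul_nonneg hs0.le hq0.le
                intro hc; nlinarith)
            · exact Or.inr (fun u hu => by have h2 := hu.2; intro hc; nlinarith)
          apply hcont.comp (by fun_prop)
          intro t ht
          have h1 := mul_le_mul_of_nonneg_left ht.1 hs0.le
          have h2 := mul_le_mul_of_nonneg_left ht.2 hs0.le
          exact Set.mem_Icc.mpr ⟨by dsimp only; linarith, by dsimp only; linarith⟩
      · intro t ht
        exact hder t (lt_trans hq0 ht.1) (lt_of_lt_of_le ht.2 hp1)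
      · intro t ht
        have ht0 : 0 < t := lt_trans hq0 ht.1
        have ht1 : t < 1 := lt_of_lt_of_le ht.2 hp1
        have htp : 0 ≤ p - t := by linarith [ht.2]
        have hX : 0 < t*(1-t) := mul_pos ht0 (by linarith)
        have hd := div_le_div_of_nonneg_left htp hX (hvar t)
        have e1 : (t-p)/(t*(1-t)) = -((p-t)/(t*(1-t))) := by ring
        have e2 : (t-p)/((δ+s*t)*(1-(δ+s*t))) = -((p-t)/((δ+s*t)*(1-(δ+s*t)))) := by ring
        rw [e1, e2]
        nlinarith [mul_le_mul_of_nonneg_left hd (sq_nonneg s)]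
  rw [hg] at main
  dsimp only at main
  linarith
end Key

lemma mul_log_div (a b : ℝ) (hb : b ≠ 0) :
    a * Real.log (a / b) = a * (Real.log a - Real.log b) := by
  rcases eq_or_ne a 0 with h | h
  · simp [h]
  · rw [Real.log_div h hb]

lemma klDiv_bool {P Q : Bool → ℝ} (hPf : P false = 1 - P true) (hQf : Q false = 1 - Q true)
    (h1 : Q true ≠ 0) (h2 : Q false ≠ 0) : klDiv P Q = dKL (P true) (Q true) := by
  unfold klDiv dKL
  rw [Fintype.sum_bool, mul_log_div _ _ h1, mul_log_div _ _ h2, hPf, hQf]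

lemma push_true (δ : ℝ) (P : Bool → ℝ) :
    pushforward (BSC δ) P true = P true * (1-δ) + P false * δ := by
  unfold pushforward BSC
  rw [Fintype.sum_bool]
  simp

lemma push_false (δ : ℝ) (P : Bool → ℝ) :
    pushforward (BSC δ) P false = P true * δ + P false * (1-δ) := by
  unfold pushforward BSC
  rw [Fintype.sum_bool]
  simp

lemma dKL_half {u : ℝ} (h1 : (1:ℝ)+u ≠ 0) (h2 : (1:ℝ)-u ≠ 0) :
    dKL ((1+u)/2) (1/2) = Gf u / 2 := by
  unfold dKL Gf
  have c1 : (1:ℝ) - (1+u)/2 = (1-u)/2 := by ring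
  have c2 : (1:ℝ) - 1/2 = 1/2 := by norm_num
  rw [c1, c2, Real.log_div h1 two_ne_zero, Real.log_div h2 two_ne_zero,
    show ((1:ℝ)/2) = 2⁻¹ by norm_num, Real.log_inv]
  ring


/-- The KL contraction coefficient of `BSC(δ)`, `δ ∈ (0, 1/2)`, equals `(1 - 2δ)²`. -/
theorem etaKL_BSC (δ : ℝ) (hδ₀ : 0 < δ) (hδ₁ : δ < 1/2) :
    (∀ P Q : Bool → ℝ, IsProbDist P → IsProbDist Q → (∀ x, Q x = 0 → P x = 0) →
      0 < klDiv P Q →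
      klDiv (pushforward (BSC δ) P) (pushforward (BSC δ) Q) ≤ (1 - 2*δ)^2 * klDiv P Q) ∧
    etaKL (BSC δ) = (1 - 2*δ)^2 := by

  have hs0 : 0 < 1 - 2*δ := by linarith
  have hs1 : 1 - 2*δ < 1 := by linarith
  -- Part 1
  have part1 : ∀ P Q : Bool → ℝ, IsProbDist P → IsProbDist Q → (∀ x, Q x = 0 → P x = 0) →
      0 < klDiv P Q →
      klDiv (pushforward (BSC δ) P) (pushforward (BSC δ) Q) ≤ (1 - 2*δ)^2 * klDiv P Q := by
    intro P Q hP hQ habs hpos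
    have hPsum : P true + P false = 1 := by have := hP.2; rwa [Fintype.sum_bool] at this
    have hQsum : Q true + Q false = 1 := by have := hQ.2; rwa [Fintype.sum_bool] at this
    have hPf : P false = 1 - P true := by linarith
    have hQf : Q false = 1 - Q true := by linarith
    have hp0 : 0 ≤ P true := hP.1 true
    have hp1 : P true ≤ 1 := by have := hP.1 false; linarith
    -- Q true ∈ (0,1)
    have hQt0 : Q true ≠ 0 := by
      intro h
      have h1 := habs true h
      have hq1 : Q false = 1 := by linarith
      have hp1' : P false = 1 := by linarith
      have : klDiv P Q = 0 := by
        unfold klDiv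
        rw [Fintype.sum_bool, h1, hq1, hp1']
        simp
      linarith
    have hQf0 : Q false ≠ 0 := by
      intro h
      have h1 := habs false h
      have hq1 : Q true = 1 := by linarith
      have hp1' : P true = 1 := by linarith
      have : klDiv P Q = 0 := by
        unfold klDiv
        rw [Fintype.sum_bool, h1, hq1, hp1']
        simp
      linarith
    have hq0 : 0 < Q true := lt_of_le_of_ne (hQ.1 true) (Ne.symm hQt0)
    have hq1 : Q true < 1 := by
      have := lt_of_le_of_ne (hQ.1 false) (Ne.symm hQf0); linarith
    -- rewrite in terms of dKL
    have e1 : klDiv P Q = dKL (P true) (Q true) := klDiv_bool hPf hQf hQt0 hQf0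
    have hPt : pushforward (BSC δ) P true = δ + (1-2*δ)*P true := by
      rw [push_true, hPf]; ring
    have hPff : pushforward (BSC δ) P false = 1 - (δ + (1-2*δ)*P true) := by
      rw [push_false, hPf]; ring
    have hQt : pushforward (BSC δ) Q true = δ + (1-2*δ)*Q true := by
      rw [push_true, hQf]; ring
    have hQff : pushforward (BSC δ) Q false = 1 - (δ + (1-2*δ)*Q true) := by
      rw [push_false, hQf]; ring
    have hq'0 : (0:ℝ) < δ + (1-2*δ)*Q true := by positivity
    have hq'1 : δ + (1-2*δ)*Q true < 1 := by nlinarith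
    have e2 : klDiv (pushforward (BSC δ) P) (pushforward (BSC δ) Q)
        = dKL (δ + (1-2*δ)*P true) (δ + (1-2*δ)*Q true) := by
      rw [klDiv_bool (by rw [hPff, hPt]) (by rw [hQff, hQt]) (by rw [hQt]; exact ne_of_gt hq'0)
        (by rw [hQff]; intro h; nlinarith), hPt, hQt]
    rw [e1, e2]
    exact keyIneq hδ₀ hδ₁ hp0 hp1 hq0 hq1
  refine ⟨part1, ?_⟩
  -- the family achieving the supremum
  have hfam : ∀ u : ℝ, 0 < u → u ≤ 1/2 →
      ∃ r ∈ {r : ℝ | ∃ P Q : Bool → ℝ, IsProbDist P ∧ IsProbDist Q ∧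
        (∀ x, Q x = 0 → P x = 0) ∧ 0 < klDiv P Q ∧
        r = klDiv (pushforward (BSC δ) P) (pushforward (BSC δ) Q) / klDiv P Q},
      (1-2*δ)^2/(1+u^2) ≤ r := by
    intro u hu0 hu2
    set P : Bool → ℝ := fun b => if b then (1+u)/2 else (1-u)/2 with hPdef
    set Q : Bool → ℝ := fun _ => 1/2 with hQdef
    have hP : IsProbDist P := by
      constructor
      · intro x; rcases x <;> simp [hPdef] <;> linarith
      · rw [Fintype.sum_bool]; simp [hPdef]; ring
    have hQ : IsProbDist Q := by
      constructor
      · intro x; simp [hQdef]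
      · rw [Fintype.sum_bool]; simp [hQdef]; norm_num
    have habs : ∀ x, Q x = 0 → P x = 0 := by intro x h; simp [hQdef] at h
    have h1u : (1:ℝ) + u ≠ 0 := by linarith
    have h2u : (1:ℝ) - u ≠ 0 := by intro h; linarith
    have eD : klDiv P Q = Gf u / 2 := by
      rw [klDiv_bool (P := P) (Q := Q) (by simp [hPdef]; ring) (by simp [hQdef]; norm_num)
        (by simp [hQdef]) (by simp [hQdef])]
      simp only [hPdef, hQdef, if_true]
      exact dKL_half h1u h2u
    have h1su : (1:ℝ) + (1-2*δ)*u ≠ 0 := by nlinarith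
    have h2su : (1:ℝ) - (1-2*δ)*u ≠ 0 := by nlinarith
    have ePt : pushforward (BSC δ) P true = (1 + (1-2*δ)*u)/2 := by
      rw [push_true]; simp [hPdef]; ring
    have ePf : pushforward (BSC δ) P false = 1 - (1 + (1-2*δ)*u)/2 := by
      rw [push_false]; simp [hPdef]; ring
    have eQt : pushforward (BSC δ) Q true = 1/2 := by
      rw [push_true]; simp [hQdef]; ring
    have eQf : pushforward (BSC δ) Q false = 1/2 := by
      rw [push_false]; simp [hQdef]; ring
    have eD' : klDiv (pushforward (BSC δ) P) (pushforward (BSC δ) Q) = Gf ((1-2*δ)*u) / 2 := by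
      rw [klDiv_bool (by rw [ePf, ePt]) (by rw [eQf, eQt]; norm_num)
        (by rw [eQt]; norm_num) (by rw [eQf]; norm_num), ePt, eQt]
      exact dKL_half h1su h2su
    have hGu_pos : 0 < Gf u := lt_of_lt_of_le (by positivity) (G_ge hu0.le (by linarith))
    have hDpos : 0 < klDiv P Q := by rw [eD]; positivity
    refine ⟨klDiv (pushforward (BSC δ) P) (pushforward (BSC δ) Q) / klDiv P Q,
      ⟨P, Q, hP, hQ, habs, hDpos, rfl⟩, ?_⟩
    rw [eD, eD']
    have hsu0 : 0 ≤ (1-2*δ)*u := by positivity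
    have hsu1 : (1-2*δ)*u < 1 := by nlinarith
    have hnum := G_ge hsu0 hsu1
    have hden := G_le hu0.le hu2
    have e : Gf ((1-2*δ)*u) / 2 / (Gf u / 2) = Gf ((1-2*δ)*u) / Gf u := by
      field_simp
    rw [e, div_le_div_iff₀ (by positivity) hGu_pos]
    have k1 : ((1-2*δ)*u)^2 = (1-2*δ)^2*u^2 := by ring
    rw [k1] at hnum
    nlinarith [mul_le_mul_of_nonneg_left hden (sq_nonneg (1-2*δ)),
      mul_le_mul_of_nonneg_left hnum (by positivity : (0:ℝ) ≤ 1 + u^2)]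
  -- upper bound
  have hub : ∀ r ∈ {r : ℝ | ∃ P Q : Bool → ℝ, IsProbDist P ∧ IsProbDist Q ∧
        (∀ x, Q x = 0 → P x = 0) ∧ 0 < klDiv P Q ∧
        r = klDiv (pushforward (BSC δ) P) (pushforward (BSC δ) Q) / klDiv P Q},
      r ≤ (1-2*δ)^2 := by
    rintro r ⟨P, Q, hP, hQ, habs, hpos, rfl⟩
    rw [div_le_iff₀ hpos]
    exact part1 P Q hP hQ habs hpos
  obtain ⟨r₀, hr₀S, hr₀⟩ := hfam (1/2) (by norm_num) le_rfl
  have hne : Set.Nonempty _ := ⟨r₀, hr₀S⟩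
  have hbdd : BddAbove {r : ℝ | ∃ P Q : Bool → ℝ, IsProbDist P ∧ IsProbDist Q ∧
        (∀ x, Q x = 0 → P x = 0) ∧ 0 < klDiv P Q ∧
        r = klDiv (pushforward (BSC δ) P) (pushforward (BSC δ) Q) / klDiv P Q} :=
    ⟨(1-2*δ)^2, fun r hr => hub r hr⟩
  unfold etaKL
  apply le_antisymm
  · exact csSup_le hne hub
  · by_contra hcon
    push_neg at hcon
    set b := sSup {r : ℝ | ∃ P Q : Bool → ℝ, IsProbDist P ∧ IsProbDist Q ∧
        (∀ x, Q x = 0 → P x = 0) ∧ 0 < klDiv P Q ∧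
        r = klDiv (pushforward (BSC δ) P) (pushforward (BSC δ) Q) / klDiv P Q} with hb
    have hbr₀ : r₀ ≤ b := le_csSup hbdd hr₀S
    have hb0 : 0 < b := by
      have : (0:ℝ) < (1-2*δ)^2/(1+(1/2:ℝ)^2) := by positivity
      linarith
    set u : ℝ := min (1/2) (Real.sqrt (((1-2*δ)^2 - b)/(2*b))) with hu
    have hu0 : 0 < u := by
      apply lt_min (by norm_num)
      apply Real.sqrt_pos.mpr
      apply div_pos (by linarith) (by linarith)
    have hu2 : u ≤ 1/2 := min_le_left _ _
    have husq : u^2 ≤ ((1-2*δ)^2 - b)/(2*b) := by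
      have h1 : u ≤ Real.sqrt (((1-2*δ)^2 - b)/(2*b)) := min_le_right _ _
      have h2 := Real.sq_sqrt (le_of_lt (div_pos (by linarith : (0:ℝ) < (1-2*δ)^2 - b)
        (by linarith : (0:ℝ) < 2*b)))
      calc u^2 ≤ (Real.sqrt (((1-2*δ)^2 - b)/(2*b)))^2 := by
            apply sq_le_sq' (by linarith [Real.sqrt_nonneg (((1-2*δ)^2 - b)/(2*b))]) h1
        _ = ((1-2*δ)^2 - b)/(2*b) := h2
    obtain ⟨r, hrS, hrge⟩ := hfam u hu0 hu2
    have hrb : r ≤ b := le_csSup hbdd hrS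
    have h3 : (1-2*δ)^2/(1+u^2) ≤ b := le_trans hrge hrb
    rw [div_le_iff₀ (by positivity)] at h3
    have h4 : b*u^2 ≤ ((1-2*δ)^2 - b)/2 := by
      have := mul_le_mul_of_nonneg_left husq hb0.le
      calc b*u^2 ≤ b*(((1-2*δ)^2 - b)/(2*b)) := this
        _ = ((1-2*δ)^2 - b)/2 := by field_simp
    nlinarith
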